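/- Any fixed point Z∞ of the Soft-Impute map, i.e., Z∞ = S_λ(P_Ω(X) + P_Ω^⊥(Z∞)), is a stationary point of f_λ(Z) = (1/2)‖P_Ω(Z) − P_Ω(X)‖_F² + λ‖Z‖_*: there exists a subgradient G ∈ ∂‖Z∞‖_* such that P_Ω(Z∞) − P_Ω(X) + λG = 0; consequently Z∞ is a global minimizer of the convex function f_λ. -/

import Mathlib

open Matrix BigOperators Finset

noncomputable section

/-- Squared Frobenius norm of a real matrix. -/
def frobSq {m n : ℕ} (A : Matrix (Fin m) (Fin n) ℝ) : ℝ :=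
  ∑ i, ∑ j, (A i j) ^ 2

/-- Frobenius norm. -/
def frobNorm {m n : ℕ} (A : Matrix (Fin m) (Fin n) ℝ) : ℝ :=
  Real.sqrt (frobSq A)

/-- The singular values of `A`, as square roots of the eigenvalues of `Aᴴ * A`. -/
def singVals {m n : ℕ} (A : Matrix (Fin m) (Fin n) ℝ) : Fin n → ℝ :=
  fun i => Real.sqrt (((by simpa using Matrix.isHermitian_conjTranspose_mul_self A :
    (Aᵀ * A).IsHermitian)).eigenvalues i)

/-- Nuclear norm: the sum of the singular values. -/
def nnorm {m n : ℕ} (A : Matrix (Fin m) (Fin n) ℝ) : ℝ :=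
  ∑ i, singVals A i

/-- Spectral norm: the largest singular value. -/
def specNorm {m n : ℕ} (A : Matrix (Fin m) (Fin n) ℝ) : ℝ :=
  ⨆ i, singVals A i

/-- Projection onto the observed entries `Ω`. -/
def pO {m n : ℕ} (Ω : Finset (Fin m × Fin n)) (Y : Matrix (Fin m) (Fin n) ℝ) :
    Matrix (Fin m) (Fin n) ℝ :=
  fun i j => if (i, j) ∈ Ω then Y i j else 0

/-- Complementary projection `P_Ω^⊥ = I - P_Ω`. -/
def pOc {m n : ℕ} (Ω : Finset (Fin m × Fin n)) (Y : Matrix (Fin m) (Fin n) ℝ) :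
    Matrix (Fin m) (Fin n) ℝ :=
  Y - pO Ω Y

/-- The objective `f_λ(Z) = ½‖P_Ω(Z) - P_Ω(X)‖_F² + λ‖Z‖_*`. -/
def fObj {m n : ℕ} (Ω : Finset (Fin m × Fin n)) (X : Matrix (Fin m) (Fin n) ℝ) (lam : ℝ)
    (Z : Matrix (Fin m) (Fin n) ℝ) : ℝ :=
  (1 / 2) * frobSq (pO Ω Z - pO Ω X) + lam * nnorm Z

/-- The surrogate `Q_λ(Z | Z̃) = ½‖P_Ω(X) + P_Ω^⊥(Z̃) - Z‖_F² + λ‖Z‖_*`. -/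
def qObj {m n : ℕ} (Ω : Finset (Fin m × Fin n)) (X : Matrix (Fin m) (Fin n) ℝ) (lam : ℝ)
    (Z Zt : Matrix (Fin m) (Fin n) ℝ) : ℝ :=
  (1 / 2) * frobSq (pO Ω X + pOc Ω Zt - Z) + lam * nnorm Z

/-- `IsSVD W U d V` : `W = U D Vᵀ` is a thin SVD of `W` with strictly positive
singular values `d` and orthonormal columns in `U` and `V`. -/
def IsSVD {m n r : ℕ} (W : Matrix (Fin m) (Fin n) ℝ) (U : Matrix (Fin m) (Fin r) ℝ)
    (d : Fin r → ℝ) (V : Matrix (Fin n) (Fin r) ℝ) : Prop :=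
  Uᵀ * U = 1 ∧ Vᵀ * V = 1 ∧ (∀ i, 0 < d i) ∧ W = U * Matrix.diagonal d * Vᵀ

/-- Trace inner product `⟨A, B⟩ = tr(AᵀB)`. -/
def minner {m n : ℕ} (A B : Matrix (Fin m) (Fin n) ℝ) : ℝ :=
  ∑ i, ∑ j, A i j * B i j

/-- `G` is a subgradient of the nuclear norm at `Z`. -/
def NucSubgrad {m n : ℕ} (Z G : Matrix (Fin m) (Fin n) ℝ) : Prop :=
  ∀ Y, nnorm Z + minner G (Y - Z) ≤ nnorm Y

end

private lemma isHT_mul_self {m n : ℕ} (A : Matrix (Fin m) (Fin n) ℝ) : (Aᵀ * A).IsHermitian := by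
  simpa using Matrix.isHermitian_conjTranspose_mul_self A

section SoftImputeAux

open Matrix

private lemma sum_sq_expand {k : ℕ} {ι : Type*} [Fintype ι] (u : ι → Fin k → ℝ) (c : ι → ℝ) :
    ∑ a, (∑ i, c i * u i a) ^ 2 = ∑ i, ∑ j, (c i * c j) * ∑ a, u i a * u j a := by
  simp only [sq, Finset.sum_mul_sum]
  rw [Finset.sum_comm]
  refine Finset.sum_congr rfl fun i _ => ?_
  rw [Finset.sum_comm]
  refine Finset.sum_congr rfl fun j _ => ?_
  rw [Finset.mul_sum]
  exact Finset.sum_congr rfl fun a _ => by ring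

private lemma cross_expand {k : ℕ} {ι : Type*} [Fintype ι] (u : ι → Fin k → ℝ) (c : ι → ℝ)
    (x : Fin k → ℝ) :
    ∑ a, x a * (∑ i, c i * u i a) = ∑ i, c i * ∑ a, u i a * x a := by
  simp only [Finset.mul_sum]
  rw [Finset.sum_comm]
  refine Finset.sum_congr rfl fun i _ => ?_
  exact Finset.sum_congr rfl fun a _ => by ring

/-- Bessel-type inequality for a pairwise-orthogonal family with norms ≤ 1. -/
private lemma bessel {k : ℕ} {ι : Type*} [Fintype ι] (u : ι → Fin k → ℝ)
    (horth : ∀ i j, i ≠ j → ∑ a, u i a * u j a = 0)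
    (hnorm : ∀ i, ∑ a, u i a * u i a ≤ 1)
    (x : Fin k → ℝ) : ∑ i, (∑ a, u i a * x a) ^ 2 ≤ ∑ a, x a ^ 2 := by
  have key : (0:ℝ) ≤ ∑ a, (x a - ∑ i, (∑ b, u i b * x b) * u i a) ^ 2 :=
    Finset.sum_nonneg fun a _ => sq_nonneg _
  have expand : ∑ a, (x a - ∑ i, (∑ b, u i b * x b) * u i a) ^ 2
      = ∑ a, x a ^ 2 - 2 * ∑ a, x a * (∑ i, (∑ b, u i b * x b) * u i a)
        + ∑ a, (∑ i, (∑ b, u i b * x b) * u i a) ^ 2 := by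
    simp only [sub_sq]
    rw [Finset.sum_add_distrib, Finset.sum_sub_distrib, Finset.mul_sum]
    congr 1
    congr 1
    exact Finset.sum_congr rfl fun a _ => by ring
  have hcross := cross_expand u (fun i => ∑ b, u i b * x b) x
  have hsq := sum_sq_expand u (fun i => ∑ b, u i b * x b)
  have hdiag : ∑ i, ∑ j, ((∑ b, u i b * x b) * (∑ b, u j b * x b)) * ∑ a, u i a * u j a
      ≤ ∑ i, (∑ b, u i b * x b) * (∑ b, u i b * x b) := by
    have h1 : ∀ i : ι, ∑ j, ((∑ b, u i b * x b) * (∑ b, u j b * x b)) * ∑ a, u i a * u j a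
        = ((∑ b, u i b * x b) * (∑ b, u i b * x b)) * ∑ a, u i a * u i a := by
      intro i
      refine Finset.sum_eq_single i (fun j _ hj => ?_) (fun h => absurd (Finset.mem_univ i) h)
      rw [horth i j (Ne.symm hj), mul_zero]
    calc ∑ i, ∑ j, ((∑ b, u i b * x b) * (∑ b, u j b * x b)) * ∑ a, u i a * u j a
        = ∑ i, ((∑ b, u i b * x b) * (∑ b, u i b * x b)) * ∑ a, u i a * u i a :=
          Finset.sum_congr rfl fun i _ => h1 i
      _ ≤ ∑ i, ((∑ b, u i b * x b) * (∑ b, u i b * x b)) * 1 :=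
          Finset.sum_le_sum fun i _ => mul_le_mul_of_nonneg_left (hnorm i) (mul_self_nonneg _)
      _ = ∑ i, (∑ b, u i b * x b) * (∑ b, u i b * x b) := by simp
  have hc2 : ∑ i, (∑ a, u i a * x a) ^ 2 = ∑ i, (∑ b, u i b * x b) * (∑ b, u i b * x b) := by
    refine Finset.sum_congr rfl fun i _ => by rw [sq]
  rw [expand, hcross, hsq] at key
  rw [hc2]
  linarith [hdiag, key]

/-- Cauchy–Schwarz in sqrt form. -/
private lemma cs_sqrt {ι : Type*} [Fintype ι] (f g : ι → ℝ) :
    ∑ i, f i * g i ≤ Real.sqrt (∑ i, f i ^ 2) * Real.sqrt (∑ i, g i ^ 2) := by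
  have h := Finset.sum_mul_sq_le_sq_mul_sq Finset.univ f g
  have h2 : Real.sqrt ((∑ i, f i * g i) ^ 2)
      ≤ Real.sqrt ((∑ i, f i ^ 2) * (∑ i, g i ^ 2)) := Real.sqrt_le_sqrt h
  rw [Real.sqrt_sq_eq_abs, Real.sqrt_mul (Finset.sum_nonneg fun i _ => sq_nonneg _)] at h2
  exact le_trans (le_abs_self _) h2

private lemma star_eq_transpose {k : ℕ} (W : Matrix (Fin k) (Fin k) ℝ) : star W = Wᵀ := by
  ext i j
  simp [Matrix.star_apply]

private lemma minner_trace {m n : ℕ} (A B : Matrix (Fin m) (Fin n) ℝ) :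
    minner A B = Matrix.trace (Aᵀ * B) := by
  simp only [minner, Matrix.trace, Matrix.diag, Matrix.mul_apply, Matrix.transpose_apply]
  rw [Finset.sum_comm]

/-- Rotating the trace inner product by a matrix with orthonormal rows (W Wᵀ = 1). -/
private lemma minner_rotate {m n : ℕ} (A B : Matrix (Fin m) (Fin n) ℝ)
    (W : Matrix (Fin n) (Fin n) ℝ) (hW2 : W * Wᵀ = 1) :
    minner A B = ∑ k, ((A *ᵥ fun i => W i k) ⬝ᵥ (B *ᵥ fun i => W i k)) := by
  have h1 : minner (A * W) (B * W) = minner A B := by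
    rw [minner_trace, minner_trace, Matrix.transpose_mul, Matrix.mul_assoc,
      ← Matrix.mul_assoc Aᵀ B W, ← Matrix.mul_assoc]
    rw [Matrix.trace_mul_comm, ← Matrix.mul_assoc, hW2, Matrix.one_mul]
  rw [← h1]
  rw [minner, Finset.sum_comm]
  refine Finset.sum_congr rfl fun k _ => Finset.sum_congr rfl fun i _ => ?_
  simp [Matrix.mul_apply, Matrix.mulVec, dotProduct]

private lemma mulVec_col {k l : ℕ} (A : Matrix (Fin k) (Fin l) ℝ) (W : Matrix (Fin l) (Fin l) ℝ)
    (j : Fin l) : A *ᵥ (fun i => W i j) = fun i => (A * W) i j := by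
  funext i
  simp [Matrix.mulVec, dotProduct, Matrix.mul_apply]

private lemma diag_mulVec {k : ℕ} (d : Fin k → ℝ) (v : Fin k → ℝ) :
    (Matrix.diagonal d) *ᵥ v = fun i => d i * v i := by
  funext i; simp [Matrix.mulVec, Matrix.diagonal, dotProduct]

/-- Norm preservation by a matrix with orthonormal columns. -/
private lemma mulVec_isometry {k l : ℕ} {U : Matrix (Fin k) (Fin l) ℝ} (hU : Uᵀ * U = 1)
    (w v : Fin l → ℝ) : (U *ᵥ w) ⬝ᵥ (U *ᵥ v) = w ⬝ᵥ v := by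
  rw [dotProduct_mulVec, ← Matrix.mulVec_transpose, Matrix.mulVec_mulVec, hU,
    Matrix.one_mulVec]

end SoftImputeAux

section SoftImputeSpec
open Matrix

private lemma conjT_eq_transpose {m n : ℕ} (Y : Matrix (Fin m) (Fin n) ℝ) : Yᴴ = Yᵀ := by
  ext i j; simp [Matrix.conjTranspose_apply]

private lemma spec_facts {m n : ℕ} (Y : Matrix (Fin m) (Fin n) ℝ) :
    ∃ W : Matrix (Fin n) (Fin n) ℝ, Wᵀ * W = 1 ∧ W * Wᵀ = 1 ∧
      (Yᴴ * Y) * W = W * Matrix.diagonal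
        (isHT_mul_self Y).eigenvalues ∧
      ∀ k, 0 ≤ (isHT_mul_self Y).eigenvalues k := by
  have h := isHT_mul_self Y
  set W : Matrix (Fin n) (Fin n) ℝ := (h.eigenvectorUnitary : Matrix (Fin n) (Fin n) ℝ) with hWdef
  have hmem := h.eigenvectorUnitary.2
  have h1 : Wᵀ * W = 1 := by rw [← star_eq_transpose]; exact hmem.1
  have h2 : W * Wᵀ = 1 := by rw [← star_eq_transpose]; exact hmem.2
  refine ⟨W, h1, h2, ?_, fun k => (Matrix.posSemidef_conjTranspose_mul_self Y).eigenvalues_nonneg k⟩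
  have hst := h.spectral_theorem
  rw [RCLike.ofReal_real_eq_id, Function.id_comp] at hst
  rw [Unitary.conjStarAlgAut_apply] at hst
  rw [star_eq_transpose] at hst
  calc (Yᴴ * Y) * W = W * Matrix.diagonal h.eigenvalues * Wᵀ * W := by rw [← hst, conjT_eq_transpose]
    _ = W * Matrix.diagonal h.eigenvalues * (Wᵀ * W) := by rw [Matrix.mul_assoc]
    _ = W * Matrix.diagonal h.eigenvalues := by rw [h1, Matrix.mul_one]

private lemma dual_bound {m n : ℕ} (G Y : Matrix (Fin m) (Fin n) ℝ)
    (hG : ∀ v : Fin n → ℝ, (G *ᵥ v) ⬝ᵥ (G *ᵥ v) ≤ v ⬝ᵥ v) :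
    minner G Y ≤ nnorm Y := by
  obtain ⟨W, hW1, hW2, hspec, hpos⟩ := spec_facts Y
  set μ := (isHT_mul_self Y).eigenvalues with hμ
  have hcolnorm : ∀ k, ((fun i => W i k) ⬝ᵥ (fun i => W i k)) = 1 := by
    intro k
    have := congrFun (congrFun hW1 k) k
    simpa [Matrix.mul_apply, dotProduct, Matrix.one_apply] using this
  have heig : ∀ k, ((Y *ᵥ fun i => W i k) ⬝ᵥ (Y *ᵥ fun i => W i k)) = μ k := by
    intro k
    have h1 : ((Y *ᵥ fun i => W i k) ⬝ᵥ (Y *ᵥ fun i => W i k))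
        = (((Yᵀ * Y) *ᵥ fun i => W i k) ⬝ᵥ fun i => W i k) := by
      rw [dotProduct_mulVec, ← Matrix.mulVec_transpose, Matrix.mulVec_mulVec]
    have h2 : ((Yᵀ * Y) *ᵥ fun i => W i k) = fun i => W i k * μ k := by
      rw [← conjT_eq_transpose, mulVec_col (Yᴴ * Y) W k, hspec]
      funext i
      rw [Matrix.mul_diagonal]
    rw [h1, h2]
    have : ((fun i => W i k * μ k) ⬝ᵥ fun i => W i k)
        = μ k * ((fun i => W i k) ⬝ᵥ fun i => W i k) := by
      simp [dotProduct, Finset.mul_sum]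
      exact Finset.sum_congr rfl fun i _ => by ring
    rw [this, hcolnorm k, mul_one]
  have hrepr := minner_rotate G Y W hW2
  have hk : ∀ k : Fin n, ((G *ᵥ fun i => W i k) ⬝ᵥ (Y *ᵥ fun i => W i k)) ≤ Real.sqrt (μ k) := by
    intro k
    have hcs : ((G *ᵥ fun i => W i k) ⬝ᵥ (Y *ᵥ fun i => W i k))
        ≤ Real.sqrt ((G *ᵥ fun i => W i k) ⬝ᵥ (G *ᵥ fun i => W i k))
          * Real.sqrt ((Y *ᵥ fun i => W i k) ⬝ᵥ (Y *ᵥ fun i => W i k)) := by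
      have := cs_sqrt (fun i => (G *ᵥ fun i => W i k) i) (fun i => (Y *ᵥ fun i => W i k) i)
      simpa [dotProduct, sq] using this
    have hGb : Real.sqrt ((G *ᵥ fun i => W i k) ⬝ᵥ (G *ᵥ fun i => W i k)) ≤ 1 := by
      have := hG (fun i => W i k)
      rw [hcolnorm k] at this
      calc Real.sqrt ((G *ᵥ fun i => W i k) ⬝ᵥ (G *ᵥ fun i => W i k))
          ≤ Real.sqrt 1 := Real.sqrt_le_sqrt this
        _ = 1 := Real.sqrt_one
    have hYb : Real.sqrt ((Y *ᵥ fun i => W i k) ⬝ᵥ (Y *ᵥ fun i => W i k)) = Real.sqrt (μ k) := by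
      rw [heig k]
    calc ((G *ᵥ fun i => W i k) ⬝ᵥ (Y *ᵥ fun i => W i k))
        ≤ Real.sqrt ((G *ᵥ fun i => W i k) ⬝ᵥ (G *ᵥ fun i => W i k))
          * Real.sqrt ((Y *ᵥ fun i => W i k) ⬝ᵥ (Y *ᵥ fun i => W i k)) := hcs
      _ ≤ 1 * Real.sqrt (μ k) := by
          rw [hYb]
          exact mul_le_mul_of_nonneg_right hGb (Real.sqrt_nonneg _)
      _ = Real.sqrt (μ k) := one_mul _
  calc minner G Y = ∑ k, ((G *ᵥ fun i => W i k) ⬝ᵥ (Y *ᵥ fun i => W i k)) := hrepr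
    _ ≤ ∑ k, Real.sqrt (μ k) := Finset.sum_le_sum fun k _ => hk k
    _ = nnorm Y := by simp [nnorm, singVals, hμ]

end SoftImputeSpec

section SoftImputeFact
open Matrix

private lemma minner_factored {m n r : ℕ} (U : Matrix (Fin m) (Fin r) ℝ) (g c : Fin r → ℝ)
    (V : Matrix (Fin n) (Fin r) ℝ) (hU : Uᵀ * U = 1) (hV : Vᵀ * V = 1) :
    minner (U * Matrix.diagonal g * Vᵀ) (U * Matrix.diagonal c * Vᵀ) = ∑ j, g j * c j := by
  rw [minner_trace]
  have ht : (U * Matrix.diagonal g * Vᵀ)ᵀ = V * Matrix.diagonal g * Uᵀ := by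
    rw [Matrix.transpose_mul, Matrix.transpose_mul, Matrix.transpose_transpose,
      Matrix.diagonal_transpose, Matrix.mul_assoc]
  rw [ht]
  have e1 : V * Matrix.diagonal g * Uᵀ * (U * Matrix.diagonal c * Vᵀ)
      = V * (Matrix.diagonal g * (Matrix.diagonal c * Vᵀ)) := by
    simp only [Matrix.mul_assoc]
    rw [← Matrix.mul_assoc Uᵀ U, hU, Matrix.one_mul]
  rw [e1, Matrix.trace_mul_comm]
  simp only [Matrix.mul_assoc]
  rw [hV, Matrix.mul_one, Matrix.diagonal_mul_diagonal, Matrix.trace_diagonal]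

private lemma nnorm_factored_le {m n r : ℕ} (U : Matrix (Fin m) (Fin r) ℝ) (c : Fin r → ℝ)
    (V : Matrix (Fin n) (Fin r) ℝ) (hU : Uᵀ * U = 1) (hV : Vᵀ * V = 1) (hc : ∀ j, 0 ≤ c j) :
    nnorm (U * Matrix.diagonal c * Vᵀ) ≤ ∑ j, c j := by
  set Z := U * Matrix.diagonal c * Vᵀ with hZ
  obtain ⟨W, hW1, hW2, hspec, hpos⟩ := spec_facts Z
  set μ := (isHT_mul_self Z).eigenvalues with hμ
  set y : Fin n → Fin r → ℝ := fun k j => ∑ a, V a j * W a k with hy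
  set p : Fin n → Fin r → ℝ := fun k j => c j * y k j with hp
  have hZtZ : Zᴴ * Z = V * Matrix.diagonal (fun j => c j * c j) * Vᵀ := by
    rw [conjT_eq_transpose, hZ, Matrix.transpose_mul, Matrix.transpose_mul,
      Matrix.transpose_transpose, Matrix.diagonal_transpose]
    simp only [Matrix.mul_assoc]
    rw [← Matrix.mul_assoc Uᵀ U, hU, Matrix.one_mul,
      ← Matrix.mul_assoc (Matrix.diagonal c) (Matrix.diagonal c), Matrix.diagonal_mul_diagonal]
  have hVt : ∀ k, Vᵀ *ᵥ (fun i => W i k) = y k := by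
    intro k; funext j
    simp [Matrix.mulVec, dotProduct, Matrix.transpose_apply, hy]
  have hWcol : ∀ k l, ((fun i => W i k) ⬝ᵥ (fun i => W i l)) = if k = l then (1:ℝ) else 0 := by
    intro k l
    have := congrFun (congrFun hW1 k) l
    simpa [Matrix.mul_apply, dotProduct, Matrix.one_apply] using this
  have hZw : ∀ l, (Zᴴ * Z) *ᵥ (fun i => W i l) = fun i => W i l * μ l := by
    intro l
    rw [mulVec_col (Zᴴ * Z) W l, hspec]
    funext i
    rw [Matrix.mul_diagonal]
  have hpp : ∀ k l, ∑ j, p k j * p l j = if k = l then μ k else 0 := by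
    intro k l
    have e1 : ∑ j, p k j * p l j = ((fun i => W i k) ⬝ᵥ ((Zᴴ * Z) *ᵥ (fun i => W i l))) := by
      rw [hZtZ, ← Matrix.mulVec_mulVec, ← Matrix.mulVec_mulVec, hVt l, diag_mulVec,
        dotProduct_mulVec, ← Matrix.mulVec_transpose, hVt k]
      simp only [dotProduct, hp]
      exact Finset.sum_congr rfl fun j _ => by ring
    rw [e1, hZw l]
    have e2 : ((fun i => W i k) ⬝ᵥ fun i => W i l * μ l)
        = μ l * ((fun i => W i k) ⬝ᵥ fun i => W i l) := by
      simp only [dotProduct, Finset.mul_sum]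
      exact Finset.sum_congr rfl fun i _ => by ring
    rw [e2, hWcol k l]
    by_cases h : k = l
    · subst h; simp
    · simp [h]
  have hμk : ∀ k, μ k = ∑ j, p k j * p k j := fun k => by
    have := hpp k k; rw [if_pos rfl] at this; exact this.symm
  set u : Fin n → Fin r → ℝ := fun k j => p k j / Real.sqrt (μ k) with hu
  have h_su : ∀ k, Real.sqrt (μ k) = ∑ j, u k j * p k j := by
    intro k
    by_cases h0 : μ k = 0
    · have hz : ∀ j, p k j = 0 := by
        intro j
        have hsum : ∑ j, p k j * p k j = 0 := by rw [← hμk k, h0]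
        have := (Finset.sum_eq_zero_iff_of_nonneg
          (fun j _ => mul_self_nonneg (p k j))).mp hsum j (Finset.mem_univ j)
        exact mul_self_eq_zero.mp this
      simp [h0, hu, hz]
    · have : ∑ j, u k j * p k j = (∑ j, p k j * p k j) / Real.sqrt (μ k) := by
        rw [Finset.sum_div]
        exact Finset.sum_congr rfl fun j _ => by rw [hu]; ring
      rw [this, ← hμk k, Real.div_sqrt]
  have hu_orth : ∀ k l, k ≠ l → ∑ j, u k j * u l j = 0 := by
    intro k l hkl
    have : ∑ j, u k j * u l j = (∑ j, p k j * p l j) / (Real.sqrt (μ k) * Real.sqrt (μ l)) := by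
      rw [Finset.sum_div]
      exact Finset.sum_congr rfl fun j _ => by rw [hu]; exact div_mul_div_comm _ _ _ _
    rw [this, hpp k l, if_neg hkl, zero_div]
  have hu_norm : ∀ k, ∑ j, u k j * u k j ≤ 1 := by
    intro k
    have e : ∑ j, u k j * u k j = (∑ j, p k j * p k j) / (Real.sqrt (μ k) * Real.sqrt (μ k)) := by
      rw [Finset.sum_div]
      exact Finset.sum_congr rfl fun j _ => by rw [hu]; exact div_mul_div_comm _ _ _ _
    rw [e, ← hμk k, Real.mul_self_sqrt (hpos k)]
    by_cases h0 : μ k = 0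
    · simp [h0]
    · rw [div_self h0]
  have step1 : ∑ k, Real.sqrt (μ k) = ∑ j, c j * ∑ k, u k j * y k j := by
    calc ∑ k, Real.sqrt (μ k) = ∑ k, ∑ j, u k j * p k j := Finset.sum_congr rfl fun k _ => h_su k
      _ = ∑ j, ∑ k, u k j * p k j := Finset.sum_comm
      _ = ∑ j, c j * ∑ k, u k j * y k j := by
          refine Finset.sum_congr rfl fun j _ => ?_
          rw [Finset.mul_sum]
          exact Finset.sum_congr rfl fun k _ => by rw [hp]; ring
  have hu1 : ∀ j, ∑ k, u k j ^ 2 ≤ 1 := by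
    intro j
    have hb := bessel u hu_orth hu_norm (fun a => if a = j then (1:ℝ) else 0)
    have e1 : ∀ k : Fin n, ∑ a, u k a * (if a = j then (1:ℝ) else 0) = u k j := by
      intro k; simp
    have e2 : ∑ a, (if a = j then (1:ℝ) else 0) ^ 2 = 1 := by simp
    calc ∑ k, u k j ^ 2 = ∑ k, (∑ a, u k a * (if a = j then (1:ℝ) else 0)) ^ 2 :=
          Finset.sum_congr rfl fun k _ => by rw [e1 k]
      _ ≤ ∑ a, (if a = j then (1:ℝ) else 0) ^ 2 := hb
      _ = 1 := e2
  have hy1 : ∀ j, ∑ k, y k j ^ 2 ≤ 1 := by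
    intro j
    have horthW : ∀ k l : Fin n, k ≠ l → ∑ a, W a k * W a l = 0 := by
      intro k l h
      have := hWcol k l; rw [if_neg h] at this
      simpa [dotProduct] using this
    have hnormW : ∀ k : Fin n, ∑ a, W a k * W a k ≤ 1 := by
      intro k
      have := hWcol k k; rw [if_pos rfl] at this
      exact le_of_eq (by simpa [dotProduct] using this)
    have hb := bessel (fun k a => W a k) horthW hnormW (fun a => V a j)
    have e1 : ∀ k : Fin n, ∑ a, W a k * V a j = y k j := by
      intro k; rw [hy]; exact Finset.sum_congr rfl fun a _ => by ring
    have e2 : ∑ a, (V a j) ^ 2 ≤ 1 := by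
      have := congrFun (congrFun hV j) j
      simp only [Matrix.mul_apply, Matrix.transpose_apply, Matrix.one_apply_eq] at this
      exact le_of_eq (by rw [← this]; exact Finset.sum_congr rfl fun a _ => by rw [sq])
    calc ∑ k, y k j ^ 2 = ∑ k, (∑ a, W a k * V a j) ^ 2 :=
          Finset.sum_congr rfl fun k _ => by rw [e1 k]
      _ ≤ ∑ a, (V a j) ^ 2 := hb
      _ ≤ 1 := e2
  have hfin : ∀ j, c j * ∑ k, u k j * y k j ≤ c j := by
    intro j
    have hcs := cs_sqrt (fun k => u k j) (fun k => y k j)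
    have h1 : Real.sqrt (∑ k, u k j ^ 2) ≤ 1 := Real.sqrt_le_one.mpr (hu1 j)
    have h2 : Real.sqrt (∑ k, y k j ^ 2) ≤ 1 := Real.sqrt_le_one.mpr (hy1 j)
    have h3 : ∑ k, u k j * y k j ≤ 1 := by
      calc ∑ k, u k j * y k j ≤ _ := hcs
        _ ≤ 1 * 1 := mul_le_mul h1 h2 (Real.sqrt_nonneg _) zero_le_one
        _ = 1 := one_mul 1
    calc c j * ∑ k, u k j * y k j ≤ c j * 1 := mul_le_mul_of_nonneg_left h3 (hc j)
      _ = c j := mul_one _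
  calc nnorm Z = ∑ k, Real.sqrt (μ k) := by simp [nnorm, singVals, hμ]
    _ = ∑ j, c j * ∑ k, u k j * y k j := step1
    _ ≤ ∑ j, c j := Finset.sum_le_sum fun j _ => hfin j

end SoftImputeFact

section SoftImputeEasy
open Matrix

private lemma minner_sub_right {m n : ℕ} (A B C : Matrix (Fin m) (Fin n) ℝ) :
    minner A (B - C) = minner A B - minner A C := by
  simp [minner, Matrix.sub_apply, mul_sub, Finset.sum_sub_distrib]

private lemma minner_smul_left {m n : ℕ} (t : ℝ) (A B : Matrix (Fin m) (Fin n) ℝ) :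
    minner (t • A) B = t * minner A B := by
  simp [minner, Matrix.smul_apply, smul_eq_mul, Finset.mul_sum, mul_assoc]

private lemma minner_add_left {m n : ℕ} (A B C : Matrix (Fin m) (Fin n) ℝ) :
    minner (A + B) C = minner A C + minner B C := by
  simp [minner, Matrix.add_apply, add_mul, Finset.sum_add_distrib]

private lemma pO_sub {m n : ℕ} (Ω : Finset (Fin m × Fin n)) (A B : Matrix (Fin m) (Fin n) ℝ) :
    pO Ω (A - B) = pO Ω A - pO Ω B := by
  ext i j
  by_cases h : (i, j) ∈ Ω <;> simp [pO, h]

private lemma minner_pO_right {m n : ℕ} (Ω : Finset (Fin m × Fin n))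
    (D C : Matrix (Fin m) (Fin n) ℝ) :
    minner (pO Ω D) C = minner (pO Ω D) (pO Ω C) := by
  refine Finset.sum_congr rfl fun i _ => Finset.sum_congr rfl fun j _ => ?_
  by_cases h : (i, j) ∈ Ω <;> simp [pO, h]

private lemma frobSq_nonneg {m n : ℕ} (A : Matrix (Fin m) (Fin n) ℝ) : 0 ≤ frobSq A :=
  Finset.sum_nonneg fun i _ => Finset.sum_nonneg fun j _ => sq_nonneg _

private lemma frobSq_add {m n : ℕ} (A B : Matrix (Fin m) (Fin n) ℝ) :
    frobSq (A + B) = frobSq A + 2 * minner A B + frobSq B := by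
  simp only [frobSq, minner, Matrix.add_apply, Finset.mul_sum, ← Finset.sum_add_distrib]
  exact Finset.sum_congr rfl fun i _ => Finset.sum_congr rfl fun j _ => by ring

end SoftImputeEasy

private lemma minner_neg_left {m n : ℕ} (A B : Matrix (Fin m) (Fin n) ℝ) :
    minner (-A) B = - minner A B := by
  simp [minner, Finset.sum_neg_distrib]

/-- any fixed point of the Soft-Impute map is a stationary point
of `f_λ`, and hence a global minimizer. -/
theorem soft_impute_fixed_point_stationary {m n r : ℕ} (Ω : Finset (Fin m × Fin n))
    (X Zinf : Matrix (Fin m) (Fin n) ℝ) (lam : ℝ) (hlam : 0 ≤ lam)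
    (U : Matrix (Fin m) (Fin r) ℝ) (d : Fin r → ℝ) (V : Matrix (Fin n) (Fin r) ℝ)
    (hSVD : IsSVD (pO Ω X + pOc Ω Zinf) U d V)
    (hfix : Zinf = U * Matrix.diagonal (fun i => max (d i - lam) 0) * Vᵀ) :
    (∃ G : Matrix (Fin m) (Fin n) ℝ, NucSubgrad Zinf G ∧
        pO Ω Zinf - pO Ω X + lam • G = 0) ∧
    ∀ Y : Matrix (Fin m) (Fin n) ℝ, fObj Ω X lam Zinf ≤ fObj Ω X lam Y := by
  obtain ⟨hU, hV, hdpos, hW⟩ := hSVD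
  set d' : Fin r → ℝ := fun i => max (d i - lam) 0 with hd'
  set g : Fin r → ℝ := fun j => if lam = 0 then 1 else min (d j) lam / lam with hg
  set G : Matrix (Fin m) (Fin n) ℝ := U * Matrix.diagonal g * Vᵀ with hGdef
  have hg_bounds : ∀ j, 0 ≤ g j ∧ g j ≤ 1 := by
    intro j
    rw [hg]
    by_cases h0 : lam = 0
    · simp [h0]
    · have hlam' : 0 < lam := lt_of_le_of_ne hlam (Ne.symm h0)
      simp only [h0, if_false]
      constructor
      · exact div_nonneg (le_min (hdpos j).le hlam) hlam
      · rw [div_le_one hlam']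
        exact min_le_right _ _
  have hlamg : ∀ j, lam * g j = min (d j) lam := by
    intro j
    rw [hg]
    by_cases h0 : lam = 0
    · simp [h0, (hdpos j).le]
    · simp only [h0, if_false]
      field_simp
  -- operator norm bound for G
  have hGop : ∀ v : Fin n → ℝ, (G *ᵥ v) ⬝ᵥ (G *ᵥ v) ≤ v ⬝ᵥ v := by
    intro v
    rw [hGdef, ← Matrix.mulVec_mulVec, ← Matrix.mulVec_mulVec, mulVec_isometry hU]
    rw [diag_mulVec]
    have step1 : ((fun j => g j * (Vᵀ *ᵥ v) j) ⬝ᵥ fun j => g j * (Vᵀ *ᵥ v) j)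
        ≤ ((Vᵀ *ᵥ v) ⬝ᵥ (Vᵀ *ᵥ v)) := by
      simp only [dotProduct]
      refine Finset.sum_le_sum fun j _ => ?_
      obtain ⟨h1, h2⟩ := hg_bounds j
      have hg2 : g j * g j ≤ 1 := by nlinarith
      have key : g j * (Vᵀ *ᵥ v) j * (g j * (Vᵀ *ᵥ v) j)
          = (g j * g j) * ((Vᵀ *ᵥ v) j * (Vᵀ *ᵥ v) j) := by ring
      rw [key]
      calc (g j * g j) * ((Vᵀ *ᵥ v) j * (Vᵀ *ᵥ v) j)
          ≤ 1 * ((Vᵀ *ᵥ v) j * (Vᵀ *ᵥ v) j) :=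
            mul_le_mul_of_nonneg_right hg2 (mul_self_nonneg _)
        _ = (Vᵀ *ᵥ v) j * (Vᵀ *ᵥ v) j := one_mul _
    refine le_trans step1 ?_
    -- Bessel for the columns of V
    have horthV : ∀ j l : Fin r, j ≠ l → ∑ a, V a j * V a l = 0 := by
      intro j l h
      have := congrFun (congrFun hV j) l
      simpa [Matrix.mul_apply, Matrix.transpose_apply, Matrix.one_apply, h] using this
    have hnormV : ∀ j : Fin r, ∑ a, V a j * V a j ≤ 1 := by
      intro j
      have := congrFun (congrFun hV j) j
      simp only [Matrix.mul_apply, Matrix.transpose_apply, Matrix.one_apply_eq] at this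
      exact le_of_eq this
    have hb := bessel (fun j a => V a j) horthV hnormV v
    simp only [dotProduct, Matrix.mulVec, Matrix.transpose_apply]
    calc ∑ j, (∑ a, V a j * v a) * (∑ a, V a j * v a)
        = ∑ j, (∑ a, V a j * v a) ^ 2 := Finset.sum_congr rfl fun j _ => (sq _).symm
      _ ≤ ∑ a, v a ^ 2 := hb
      _ = ∑ a, v a * v a := Finset.sum_congr rfl fun a _ => sq (v a)
  -- subgradient property
  have hsub : NucSubgrad Zinf G := by
    intro Y
    have hGY : minner G Y ≤ nnorm Y := dual_bound G Y hGop
    have hGZ : minner G Zinf = ∑ j, d' j := by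
      rw [hfix, hGdef, minner_factored U g d' V hU hV]
      refine Finset.sum_congr rfl fun j _ => ?_
      by_cases hj : d' j = 0
      · rw [hj, mul_zero]
      · have hdj : lam < d j := by
          by_contra hle
          push_neg at hle
          exact hj (by rw [hd']; simp [max_eq_right (sub_nonpos.mpr hle)])
        have hgj : g j = 1 := by
          rw [hg]
          by_cases h0 : lam = 0
          · simp [h0]
          · have hlam' : 0 < lam := lt_of_le_of_ne hlam (Ne.symm h0)
            simp only [h0, if_false]
            rw [min_eq_right hdj.le, div_self h0]
        rw [hgj, one_mul]
    have hnZ : nnorm Zinf ≤ ∑ j, d' j := by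
      rw [hfix]
      exact nnorm_factored_le U d' V hU hV fun j => le_max_right _ _
    have hml := minner_sub_right G Y Zinf
    linarith
  -- stationarity
  have hsmul : lam • G = U * Matrix.diagonal (fun j => min (d j) lam) * Vᵀ := by
    have hsg2 : lam • g = fun j => min (d j) lam := by
      funext j
      rw [Pi.smul_apply, smul_eq_mul, hlamg j]
    rw [hGdef, ← Matrix.smul_mul, ← Matrix.mul_smul, ← Matrix.diagonal_smul, hsg2]
  have hstat : pO Ω Zinf - pO Ω X + lam • G = 0 := by
    have h1 : pO Ω Zinf - pO Ω X = Zinf - (pO Ω X + pOc Ω Zinf) := by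
      simp only [pOc]
      abel
    rw [h1, hW, hsmul, hfix]
    have hcomb : U * Matrix.diagonal d' * Vᵀ - U * Matrix.diagonal d * Vᵀ
        + U * Matrix.diagonal (fun j => min (d j) lam) * Vᵀ
        = U * Matrix.diagonal (fun j => d' j - d j + min (d j) lam) * Vᵀ := by
      rw [← Matrix.sub_mul, ← Matrix.add_mul, ← Matrix.mul_sub, ← Matrix.mul_add,
        Matrix.diagonal_sub, Matrix.diagonal_add]
    rw [hcomb]
    have hzero : (fun j => d' j - d j + min (d j) lam) = fun _ => (0:ℝ) := by
      funext j
      rw [hd']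
      rcases le_total (d j) lam with h | h
      · rw [min_eq_left h]
        simp [max_eq_right (sub_nonpos.mpr h)]
      · rw [min_eq_right h]
        simp [max_eq_left (sub_nonneg.mpr h)]
    rw [hzero, Matrix.diagonal_zero, Matrix.mul_zero, Matrix.zero_mul]
  refine ⟨⟨G, hsub, hstat⟩, ?_⟩
  -- global minimality
  intro Y
  have hBd : pO Ω Y - pO Ω X = (pO Ω Zinf - pO Ω X) + pO Ω (Y - Zinf) := by
    rw [pO_sub]
    abel
  have hexp := frobSq_add (pO Ω Zinf - pO Ω X) (pO Ω (Y - Zinf))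
  have hcross : minner (pO Ω Zinf - pO Ω X) (pO Ω (Y - Zinf))
      = minner (pO Ω Zinf - pO Ω X) (Y - Zinf) := by
    rw [← pO_sub, ← minner_pO_right, pO_sub]
  have hsg := hsub Y
  have hlG : lam • G = -(pO Ω Zinf - pO Ω X) := eq_neg_of_add_eq_zero_right hstat
  have hmin_eq : lam * minner G (Y - Zinf) = - minner (pO Ω Zinf - pO Ω X) (Y - Zinf) := by
    rw [← minner_smul_left, hlG, minner_neg_left]
  have hlamnn : lam * nnorm Zinf + lam * minner G (Y - Zinf) ≤ lam * nnorm Y := by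
    have h := mul_le_mul_of_nonneg_left hsg hlam
    rw [mul_add] at h
    exact h
  have hfq := frobSq_nonneg (pO Ω (Y - Zinf))
  show (1/2) * frobSq (pO Ω Zinf - pO Ω X) + lam * nnorm Zinf
      ≤ (1/2) * frobSq (pO Ω Y - pO Ω X) + lam * nnorm Y
  rw [hBd, hexp, hcross]
  linarith
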